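/- For n ≥ 2, the number of permutations σ ∈ S_n with σ(1) = 1 which agree at some point with the transposition (1 2) equals (n-1)! - d_{n-1} - d_{n-2}, where d_k is the number of derangements of [k]. -/

import Mathlib

open Finset Nat Equiv Equiv.Perm

lemma decomp_fst {m : ℕ} (σ : Perm (Fin (m+1))) :
    (Equiv.Perm.decomposeFin σ).1 = σ 0 := by
  calc (Equiv.Perm.decomposeFin σ).1
      = Equiv.Perm.decomposeFin.symm (Equiv.Perm.decomposeFin σ) 0 := by
        rw [Equiv.Perm.decomposeFin_symm_apply_zero]
    _ = σ 0 := by rw [Equiv.Perm.decomposeFin.symm_apply_apply]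

lemma decomp_succ {m : ℕ} (σ : Perm (Fin (m+1))) (h : σ 0 = 0) (i : Fin m) :
    σ i.succ = ((Equiv.Perm.decomposeFin σ).2 i).succ := by
  conv_lhs => rw [← Equiv.Perm.decomposeFin.symm_apply_apply σ]
  have h1 : Equiv.Perm.decomposeFin σ = (0, (Equiv.Perm.decomposeFin σ).2) := by
    ext1
    · rw [decomp_fst, h]
    · rfl
  rw [h1, Equiv.Perm.decomposeFin_symm_apply_succ, Equiv.swap_self, Equiv.refl_apply]

lemma fix_iff {m : ℕ} (σ : Perm (Fin (m+1))) (h : σ 0 = 0) (i : Fin m) :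
    σ i.succ = i.succ ↔ (Equiv.Perm.decomposeFin σ).2 i = i := by
  rw [decomp_succ σ h, Fin.succ_inj]

lemma transport {m : ℕ} (q : Perm (Fin m) → Prop) [DecidablePred q] :
    (univ.filter fun σ : Perm (Fin (m+1)) =>
        σ 0 = 0 ∧ q ((Equiv.Perm.decomposeFin σ).2)).card
      = (univ.filter q).card := by
  apply Finset.card_nbij' (fun σ => (Equiv.Perm.decomposeFin σ).2)
    (fun e => Equiv.Perm.decomposeFin.symm (0, e))
  · intro σ hσ
    simp only [mem_coe, mem_filter, mem_univ, true_and] at hσ ⊢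
    exact hσ.2
  · intro e he
    simp only [mem_coe, mem_filter, mem_univ, true_and] at he ⊢
    simpa using he
  · intro σ hσ
    simp only [mem_coe, mem_filter, mem_univ, true_and] at hσ
    conv_rhs => rw [← Equiv.Perm.decomposeFin.symm_apply_apply σ]
    have h1 : Equiv.Perm.decomposeFin σ = (0, (Equiv.Perm.decomposeFin σ).2) := by
      ext1
      · rw [decomp_fst, hσ.1]
      · rfl
    beta_reduce
    rw [← h1]
  · intro e he; simp

lemma derangements_card (m : ℕ) :
    (univ.filter fun e : Perm (Fin m) => ∀ j, e j ≠ j).card = numDerangements m := by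
  rw [← card_derangements_fin_eq_numDerangements, ← Fintype.card_subtype]
  apply Fintype.card_congr
  exact Equiv.subtypeEquivRight (fun f => Iff.rfl)

lemma fix_zero_derange_card (m : ℕ) :
    (univ.filter fun σ : Perm (Fin (m+1)) =>
        σ 0 = 0 ∧ ∀ j, j ≠ 0 → σ j ≠ j).card = numDerangements m := by
  rw [← derangements_card m, ← transport (fun e : Perm (Fin m) => ∀ j, e j ≠ j)]
  congr 1
  apply Finset.filter_congr
  intro σ _
  constructor
  · rintro ⟨h0, H⟩
    refine ⟨h0, fun i hi => ?_⟩
    exact H i.succ (Fin.succ_ne_zero i) ((fix_iff σ h0 i).mpr hi)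
  · rintro ⟨h0, H⟩
    refine ⟨h0, fun j hj hfix => ?_⟩
    obtain ⟨i, rfl⟩ := Fin.eq_succ_of_ne_zero hj
    exact H i ((fix_iff σ h0 i).mp hfix)

theorem count_fixing_one_and_agreeing_with_transposition (n : ℕ) (hn : 2 ≤ n) :
    ((Finset.univ.filter (fun σ : Equiv.Perm (Fin n) =>
        σ ⟨0, by omega⟩ = ⟨0, by omega⟩ ∧
        ∃ i : Fin n, σ i = Equiv.swap (⟨0, by omega⟩ : Fin n) ⟨1, by omega⟩ i)).card : ℤ) =
      ((n - 1)! : ℤ) - numDerangements (n - 1) - numDerangements (n - 2) := by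
  obtain ⟨k, rfl⟩ : ∃ k, n = k + 2 := ⟨n - 2, by omega⟩
  have e0 : (⟨0, by omega⟩ : Fin (k+2)) = 0 := rfl
  have e1 : (⟨1, by omega⟩ : Fin (k+2)) = 1 := rfl
  simp only [e0, e1]
  -- rewrite the predicate
  have hfilter :
      (univ.filter fun σ : Perm (Fin (k+2)) =>
        σ 0 = 0 ∧ ∃ i, σ i = Equiv.swap (0 : Fin (k+2)) 1 i)
      = (univ.filter fun σ : Perm (Fin (k+2)) =>
        σ 0 = 0 ∧ ∃ j : Fin (k+1), j ≠ 0 ∧ (Equiv.Perm.decomposeFin σ).2 j = j) := by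
    apply Finset.filter_congr
    intro σ _
    constructor
    · rintro ⟨h0, i, hi⟩
      refine ⟨h0, ?_⟩
      rcases eq_or_ne i 0 with rfl | hi0
      · rw [Equiv.swap_apply_left, h0] at hi
        exact absurd hi.symm one_ne_zero
      rcases eq_or_ne i 1 with rfl | hi1
      · rw [Equiv.swap_apply_right, ← h0] at hi
        exact absurd (σ.injective hi) one_ne_zero
      · rw [Equiv.swap_apply_of_ne_of_ne hi0 hi1] at hi
        obtain ⟨j, rfl⟩ := Fin.eq_succ_of_ne_zero hi0
        refine ⟨j, fun hj => ?_, (fix_iff σ h0 j).mp hi⟩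
        rw [hj, Fin.succ_zero_eq_one] at hi1
        exact hi1 rfl
    · rintro ⟨h0, j, hj, hfix⟩
      refine ⟨h0, j.succ, ?_⟩
      rw [Equiv.swap_apply_of_ne_of_ne (Fin.succ_ne_zero j)
        (fun h => hj (Fin.succ_inj.mp (h.trans Fin.succ_zero_eq_one.symm)))]
      exact (fix_iff σ h0 j).mpr hfix
  rw [hfilter, transport (fun e : Perm (Fin (k+1)) => ∃ j : Fin (k+1), j ≠ 0 ∧ e j = j)]
  -- counting in Perm (Fin (k+1))
  have htot : (univ.filter fun e : Perm (Fin (k+1)) => ∃ j : Fin (k+1), j ≠ 0 ∧ e j = j).card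
      + (univ.filter fun e : Perm (Fin (k+1)) => ¬ ∃ j : Fin (k+1), j ≠ 0 ∧ e j = j).card
      = (k+1)! := by
    rw [Finset.card_filter_add_card_filter_not, Finset.card_univ,
      Fintype.card_perm, Fintype.card_fin]
  have hneg : (univ.filter fun e : Perm (Fin (k+1)) => ¬ ∃ j : Fin (k+1), j ≠ 0 ∧ e j = j)
      = univ.filter fun e => ∀ j, j ≠ 0 → e j ≠ j := by
    apply Finset.filter_congr
    intro e _
    simp only [not_exists, not_and]
  have hsplit : (univ.filter fun e : Perm (Fin (k+1)) => ∀ j, j ≠ 0 → e j ≠ j).card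
      = numDerangements (k+1) + numDerangements k := by
    have := Finset.card_filter_add_card_filter_not
      (s := univ.filter fun e : Perm (Fin (k+1)) => ∀ j, j ≠ 0 → e j ≠ j)
      (p := fun e => e 0 = 0)
    rw [Finset.filter_filter, Finset.filter_filter] at this
    have h1 : (univ.filter fun e : Perm (Fin (k+1)) => (∀ j, j ≠ 0 → e j ≠ j) ∧ e 0 = 0).card
        = numDerangements k := by
      rw [← fix_zero_derange_card k]
      congr 1
      apply Finset.filter_congr
      intro e _
      tauto
    have h2 : (univ.filter fun e : Perm (Fin (k+1)) => (∀ j, j ≠ 0 → e j ≠ j) ∧ ¬ e 0 = 0).card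
        = numDerangements (k+1) := by
      rw [← derangements_card (k+1)]
      congr 1
      apply Finset.filter_congr
      intro e _
      constructor
      · rintro ⟨H, h0⟩ j
        rcases eq_or_ne j 0 with rfl | hj
        · exact h0
        · exact H j hj
      · intro H
        exact ⟨fun j _ => H j, H 0⟩
    omega
  rw [hneg, hsplit] at htot
  have hfact : k + 2 - 1 = k + 1 := rfl
  have hfact2 : k + 2 - 2 = k := rfl
  rw [hfact, hfact2]
  -- conclude by linear arithmetic over casts
  omega
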